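/- Let k be a field of characteristic 2, and let k(y₁), k(y₂) be two Artin–Schreier extensions of k with y_i² + γ_i y_i = w_i for γ_i, w_i ∈ k* (i = 1,2), where each y_i ∉ k. Then k(y₁) = k(y₂) if and only if γ₂ y₁ + γ₁ y₂ ∈ k. -/

import Mathlib

open Polynomial

/-- Two Artin–Schreier extensions `k(y₁)` and `k(y₂)` of a field `k` of characteristic 2,
with `yᵢ² + γᵢ yᵢ = wᵢ` (`γᵢ, wᵢ ∈ k*`, `yᵢ ∉ k`), coincide iff `γ₂y₁ + γ₁y₂ ∈ k`. -/
theorem stmt10 (k K : Type*) [Field k] [Field K] [Algebra k K] [CharP k 2]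
    (y₁ y₂ : K) (γ₁ γ₂ w₁ w₂ : k)
    (hγ₁ : γ₁ ≠ 0) (hγ₂ : γ₂ ≠ 0) (hw₁ : w₁ ≠ 0) (hw₂ : w₂ ≠ 0)
    (h₁ : y₁ ^ 2 + algebraMap k K γ₁ * y₁ = algebraMap k K w₁)
    (h₂ : y₂ ^ 2 + algebraMap k K γ₂ * y₂ = algebraMap k K w₂)
    (hy₁ : y₁ ∉ Set.range (algebraMap k K)) (hy₂ : y₂ ∉ Set.range (algebraMap k K)) :
    IntermediateField.adjoin k {y₁} = IntermediateField.adjoin k {y₂} ↔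
      algebraMap k K γ₂ * y₁ + algebraMap k K γ₁ * y₂ ∈ Set.range (algebraMap k K) := by
  have hinj : Function.Injective (algebraMap k K) := (algebraMap k K).injective
  haveI : CharP K 2 := charP_of_injective_algebraMap hinj 2
  have two0 : (2 : K) = 0 := by exact_mod_cast CharP.cast_eq_zero K 2
  have twok : (2 : k) = 0 := by exact_mod_cast CharP.cast_eq_zero k 2
  set A := algebraMap k K with hA
  constructor
  · intro heq
    have hy₂mem : y₂ ∈ IntermediateField.adjoin k {y₁} := by
      rw [heq]; exact IntermediateField.mem_adjoin_simple_self k y₂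
    have hmon : (X ^ 2 + C γ₁ * X + C w₁ : k[X]).Monic := by monicity!
    have haevf : aeval y₁ (X ^ 2 + C γ₁ * X + C w₁ : k[X]) = 0 := by
      simp only [map_add, map_mul, aeval_X_pow, aeval_X, aeval_C]
      linear_combination h₁ + (A w₁) * two0
    have hint : IsIntegral k y₁ := ⟨X ^ 2 + C γ₁ * X + C w₁, hmon, haevf⟩
    have hy₂mem' : y₂ ∈ Algebra.adjoin k {y₁} := by
      have hts := IntermediateField.adjoin_simple_toSubalgebra_of_isAlgebraic hint.isAlgebraic
      rw [← hts]
      exact hy₂mem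
    rw [Algebra.adjoin_singleton_eq_range_aeval, AlgHom.mem_range] at hy₂mem'
    obtain ⟨p, hp⟩ := hy₂mem'
    set r := p %ₘ (X ^ 2 + C γ₁ * X + C w₁) with hr
    have haevr : aeval y₁ r = y₂ := by
      have hdiv := Polynomial.modByMonic_add_div p (X ^ 2 + C γ₁ * X + C w₁)
      calc aeval y₁ r
          = aeval y₁ ((X ^ 2 + C γ₁ * X + C w₁) * (p /ₘ (X ^ 2 + C γ₁ * X + C w₁)) + r) := by
            simp [map_add, map_mul, haevf]
        _ = aeval y₁ p := by rw [add_comm, hdiv]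
        _ = y₂ := hp
    have hdeg : r.degree ≤ 1 := by
      have hlt := Polynomial.degree_modByMonic_lt p hmon
      have hdf : (X ^ 2 + C γ₁ * X + C w₁ : k[X]).degree = 2 := by compute_degree!
      rw [hdf] at hlt
      exact Order.le_of_lt_succ hlt
    set a := r.coeff 0 with ha
    set b := r.coeff 1 with hb
    have hrep : y₂ = A b * y₁ + A a := by
      rw [← haevr]
      conv_lhs => rw [Polynomial.eq_X_add_C_of_degree_le_one hdeg]
      simp [map_add, map_mul]
      rfl
    have h₂' := h₂
    rw [hrep] at h₂'
    have key : A (b ^ 2 * γ₁ + γ₂ * b) * y₁ = A (w₂ + a ^ 2 + b ^ 2 * w₁ + γ₂ * a) := by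
      simp only [map_add, map_mul, map_pow]
      linear_combination h₂' - (A b) ^ 2 * h₁ +
        ((A b) ^ 2 * (A γ₁) * y₁ - A b * (A a) * y₁ - (A a) ^ 2 - A γ₂ * (A a)
          - (A b) ^ 2 * (A w₁)) * two0
    by_cases hc : b ^ 2 * γ₁ + γ₂ * b = 0
    · have hbne : b ≠ 0 := fun hb0 =>
        hy₂ ⟨a, by rw [hrep, hb0]; simp⟩
      have hbγ : b * γ₁ = γ₂ := by
        have hfac : b * (b * γ₁ + γ₂) = 0 := by linear_combination hc
        rcases mul_eq_zero.mp hfac with h | h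
        · exact absurd h hbne
        · linear_combination h - γ₂ * twok
      refine ⟨γ₁ * a, ?_⟩
      have hbγK : A b * A γ₁ = A γ₂ := by rw [← map_mul]; exact congrArg A hbγ
      rw [hrep, map_mul]
      linear_combination (-y₁) * hbγK + (-(A γ₂ * y₁)) * two0
    · exfalso
      apply hy₁
      refine ⟨(w₂ + a ^ 2 + b ^ 2 * w₁ + γ₂ * a) / (b ^ 2 * γ₁ + γ₂ * b), ?_⟩
      have hne : A (b ^ 2 * γ₁ + γ₂ * b) ≠ 0 := fun h => hc (hinj (by simpa using h))
      rw [map_div₀, ← key, mul_div_cancel_left₀ _ hne]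
  · rintro ⟨c, hc⟩
    have e₂ : A γ₁ * y₂ = A c + A γ₂ * y₁ := by
      linear_combination -hc - A γ₂ * y₁ * two0
    have e₁ : A γ₂ * y₁ = A c + A γ₁ * y₂ := by
      linear_combination -hc - A γ₁ * y₂ * two0
    have hγ₁K : A γ₁ ≠ 0 := fun h => hγ₁ (hinj (by simpa using h))
    have hγ₂K : A γ₂ ≠ 0 := fun h => hγ₂ (hinj (by simpa using h))
    apply le_antisymm
    · rw [IntermediateField.adjoin_simple_le_iff]
      have e : y₁ = A γ₂⁻¹ * (A c + A γ₁ * y₂) := by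
        rw [← e₁, map_inv₀, inv_mul_cancel_left₀ hγ₂K]
      rw [e]
      exact mul_mem (IntermediateField.algebraMap_mem _ _)
        (add_mem (IntermediateField.algebraMap_mem _ _)
          (mul_mem (IntermediateField.algebraMap_mem _ _)
            (IntermediateField.mem_adjoin_simple_self k y₂)))
    · rw [IntermediateField.adjoin_simple_le_iff]
      have e : y₂ = A γ₁⁻¹ * (A c + A γ₂ * y₁) := by
        rw [← e₂, map_inv₀, inv_mul_cancel_left₀ hγ₁K]
      rw [e]
      exact mul_mem (IntermediateField.algebraMap_mem _ _)
        (add_mem (IntermediateField.algebraMap_mem _ _)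
          (mul_mem (IntermediateField.algebraMap_mem _ _)
            (IntermediateField.mem_adjoin_simple_self k y₁)))
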